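/- Let λ₀ > 0, λ ≥ 0 be real constants, let z : [0,∞) → (0,∞) be continuous, and let F : [0,∞) → ℝ satisfy F(t)/t → 0 as t → ∞. If there exists T > 0 such that for all t ≥ T, ln z(t) ≤ λ t - λ₀ ∫₀ᵗ z(s) ds + F(t), then limsup_{t→∞} (1/t) ∫₀ᵗ z(s) ds ≤ λ/λ₀. -/

import Mathlib

open MeasureTheory Filter

theorem stmt_5 (lam0 lam : ℝ) (hlam0 : 0 < lam0) (hlam : 0 ≤ lam)
    (z : ℝ → ℝ) (hzpos : ∀ t : ℝ, 0 ≤ t → 0 < z t)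
    (hzcont : ContinuousOn z (Set.Ici 0))
    (F : ℝ → ℝ) (hF : Tendsto (fun t => F t / t) atTop (nhds 0))
    (T : ℝ) (hT : 0 < T)
    (hineq : ∀ t ≥ T, Real.log (z t) ≤ lam * t - lam0 * (∫ s in (0:ℝ)..t, z s) + F t) :
    Filter.limsup (fun t => (1 / t) * ∫ s in (0:ℝ)..t, z s) atTop ≤ lam / lam0 := by
  -- continuous extension of z
  set w : ℝ → ℝ := fun t => z (max t 0) with hw
  have hwcont : Continuous w :=
    hzcont.comp_continuous (continuous_id.max continuous_const) (fun t => Set.mem_Ici.mpr (le_max_right _ _))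
  have hwz : ∀ t : ℝ, 0 ≤ t → w t = z t := fun t ht => by simp [hw, max_eq_left ht]
  have hwpos : ∀ t : ℝ, 0 < w t := fun t => hzpos _ (le_max_right _ _)
  set J : ℝ → ℝ := fun t => ∫ s in (0:ℝ)..t, w s with hJ
  have hJz : ∀ t : ℝ, 0 ≤ t → (∫ s in (0:ℝ)..t, z s) = J t := by
    intro t ht
    refine intervalIntegral.integral_congr fun s hs => ?_
    rw [Set.uIcc_of_le ht] at hs
    exact (hwz s hs.1).symm
  have hJnn : ∀ t : ℝ, 0 ≤ t → 0 ≤ J t := fun t ht =>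
    intervalIntegral.integral_nonneg ht (fun s _ => (hwpos s).le)
  have hJderiv : ∀ t : ℝ, HasDerivAt J (w t) t := fun t =>
    intervalIntegral.integral_hasDerivAt_right (hwcont.intervalIntegrable 0 t)
      (hwcont.stronglyMeasurableAtFilter _ _) hwcont.continuousAt
  have hJcont : Continuous J := continuous_iff_continuousAt.2 fun t => (hJderiv t).continuousAt
  set G : ℝ → ℝ := fun t => Real.exp (lam0 * J t) with hG
  have hGderiv : ∀ t : ℝ, HasDerivAt G (Real.exp (lam0 * J t) * (lam0 * w t)) t := fun t =>
    ((hJderiv t).const_mul lam0).exp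
  have hGpos : ∀ t : ℝ, 0 < G t := fun t => Real.exp_pos _
  -- key eventual bound
  have key : ∀ ε > (0:ℝ), ∀ᶠ t in atTop, (1 / t) * ∫ s in (0:ℝ)..t, z s ≤ lam / lam0 + ε := by
    intro ε hε
    set δ : ℝ := lam0 * ε / 3 with hδdef
    have hδ : 0 < δ := by positivity
    -- choose T₁ with F s ≤ δ s for s ≥ T₁
    have hFev : ∀ᶠ s in atTop, F s / s ≤ δ :=
      (hF.eventually (eventually_le_nhds hδ))
    obtain ⟨T₁, hT₁⟩ := (hFev.and (eventually_ge_atTop (max T 1))).exists_forall_of_atTop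
    have hT₁T : T ≤ T₁ := le_trans (le_max_left _ _) (hT₁ T₁ le_rfl).2
    have hT₁1 : (1:ℝ) ≤ T₁ := le_trans (le_max_right _ _) (hT₁ T₁ le_rfl).2
    have hT₁0 : (0:ℝ) < T₁ := lt_of_lt_of_le one_pos hT₁1
    -- main integral bound for t ≥ T₁
    have main : ∀ t ≥ T₁, G t ≤ G T₁ + (t - T₁) * (lam0 * Real.exp ((lam + δ) * t)) := by
      intro t ht
      have hftc : G t - G T₁ = ∫ s in T₁..t, Real.exp (lam0 * J s) * (lam0 * w s) := by
        rw [intervalIntegral.integral_eq_sub_of_hasDerivAt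
          (fun s _ => hGderiv s)
          (((Real.continuous_exp.comp (continuous_const.mul hJcont)).mul
            (continuous_const.mul hwcont)).intervalIntegrable _ _)]
      have hmono : (∫ s in T₁..t, Real.exp (lam0 * J s) * (lam0 * w s))
          ≤ ∫ s in T₁..t, lam0 * Real.exp ((lam + δ) * t) := by
        refine intervalIntegral.integral_mono_on ht
          (((Real.continuous_exp.comp (continuous_const.mul hJcont)).mul
            (continuous_const.mul hwcont)).intervalIntegrable _ _)
          (intervalIntegrable_const) ?_
        intro s hs
        have hsT : T ≤ s := le_trans hT₁T hs.1
        have hs0 : (0:ℝ) ≤ s := le_trans (le_trans zero_le_one hT₁1) hs.1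
        have heq : Real.exp (lam0 * J s) * (lam0 * w s)
            = lam0 * Real.exp (lam0 * J s + Real.log (w s)) := by
          rw [Real.exp_add, Real.exp_log (hwpos s)]; ring
        rw [heq]
        have h1 : lam0 * J s + Real.log (w s) ≤ lam * s + F s := by
          have := hineq s hsT
          rw [hJz s hs0, ← hwz s hs0] at this
          linarith
        have h2 : F s ≤ δ * s := by
          have hs1 : (1:ℝ) ≤ s := le_trans hT₁1 hs.1
          have := (hT₁ s hs.1).1
          calc F s = (F s / s) * s := by field_simp
            _ ≤ δ * s := mul_le_mul_of_nonneg_right this hs0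
        have h3 : lam0 * J s + Real.log (w s) ≤ (lam + δ) * t := by
          have : (lam + δ) * s ≤ (lam + δ) * t :=
            mul_le_mul_of_nonneg_left hs.2 (by linarith)
          nlinarith
        exact mul_le_mul_of_nonneg_left (Real.exp_le_exp.2 h3) hlam0.le
      rw [intervalIntegral.integral_const, smul_eq_mul] at hmono
      linarith
    -- eventual comparisons
    have hev1 : ∀ᶠ t in atTop, 2 * G T₁ ≤ Real.exp ((lam + 3*δ) * t) := by
      have h : Tendsto (fun t : ℝ => Real.exp ((lam + 3*δ) * t)) atTop atTop :=
        Real.tendsto_exp_atTop.comp (tendsto_id.const_mul_atTop (by linarith))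
      exact h.eventually_ge_atTop _
    have hev2 : ∀ᶠ t in atTop, t * lam0 ≤ Real.exp (2*δ*t) / 2 := by
      have h : Tendsto (fun t : ℝ => Real.exp (2*δ*t) / (2*δ*t)) atTop atTop := by
        have := (Real.tendsto_exp_div_pow_atTop 1).comp
          (tendsto_id.const_mul_atTop (by linarith : (0:ℝ) < 2*δ))
        simpa [Function.comp_def] using this
      filter_upwards [h.eventually_ge_atTop (2 * lam0 / δ), eventually_gt_atTop 0] with t h1 h2
      rw [div_le_div_iff₀ (by positivity) (by positivity)] at h1
      have h1' : (4*lam0*t) * δ ≤ Real.exp (2*δ*t) * δ := by nlinarith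
      have := le_of_mul_le_mul_right h1' hδ
      nlinarith [mul_pos hlam0 h2]
    filter_upwards [hev1, hev2, eventually_ge_atTop T₁, eventually_gt_atTop 0] with t h1 h2 h3 h4
    have hGle : G t ≤ Real.exp ((lam + 3*δ) * t) := by
      have := main t h3
      have hbound : (t - T₁) * (lam0 * Real.exp ((lam + δ) * t))
          ≤ Real.exp ((lam + 3*δ) * t) / 2 := by
        have e1 : (t - T₁) * lam0 ≤ Real.exp (2*δ*t) / 2 := by
          have : (t - T₁) * lam0 ≤ t * lam0 := by nlinarith [hlam0.le]
          linarith
        have e2 : Real.exp (2*δ*t) / 2 * Real.exp ((lam + δ) * t)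
            = Real.exp ((lam + 3*δ) * t) / 2 := by
          rw [div_mul_eq_mul_div, ← Real.exp_add]; ring_nf
        calc (t - T₁) * (lam0 * Real.exp ((lam + δ) * t))
            = ((t - T₁) * lam0) * Real.exp ((lam + δ) * t) := by ring
          _ ≤ Real.exp (2*δ*t) / 2 * Real.exp ((lam + δ) * t) :=
              mul_le_mul_of_nonneg_right e1 (Real.exp_pos _).le
          _ = Real.exp ((lam + 3*δ) * t) / 2 := e2
      linarith
    have hlog : lam0 * J t ≤ (lam + 3*δ) * t := by
      have := Real.exp_le_exp.1 hGle
      exact this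
    have ht0 : (0:ℝ) ≤ t := h4.le
    rw [hJz t ht0]
    have : (1 / t) * J t ≤ (lam + 3*δ) / lam0 := by
      rw [one_div, inv_mul_le_iff₀ h4, mul_div_assoc', le_div_iff₀ hlam0]
      nlinarith
    calc (1 / t) * J t ≤ (lam + 3*δ) / lam0 := this
      _ = lam / lam0 + ε := by rw [hδdef]; field_simp
  -- conclude
  have cobdd : IsCoboundedUnder (· ≤ ·) atTop (fun t => (1 / t) * ∫ s in (0:ℝ)..t, z s) := by
    apply isCoboundedUnder_le_of_eventually_le atTop (x := 0)
    filter_upwards [eventually_gt_atTop (0:ℝ)] with t ht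
    rw [hJz t ht.le]
    exact mul_nonneg (by positivity) (hJnn t ht.le)
  refine le_of_forall_pos_le_add fun ε hε => ?_
  exact Filter.limsup_le_of_le cobdd (key ε hε)
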